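/- Let A be a dual Banach algebra, i.e. there is a closed A-submodule A_* of A* with A = (A_*)* isometrically as A-bimodules. If the bidual A** endowed with the first Arens product □ is approximately cyclic amenable, then A is approximately cyclic amenable. -/

import Mathlib

open Filter Topology

set_option synthInstance.maxHeartbeats 400000
set_option maxHeartbeats 800000

noncomputable section

universe u v

variable {A : Type u} [NonUnitalNormedRing A] [NormedSpace ℂ A]
  [IsScalarTower ℂ A A] [SMulCommClass ℂ A A]

/-- The left module action of `A` on its dual `A*`: `(a · f) b = f (b * a)`. -/
def lAct (a : A) (f : A →L[ℂ] ℂ) : A →L[ℂ] ℂ :=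
  f.comp ((ContinuousLinearMap.mul ℂ A).flip a)

/-- The right module action of `A` on its dual `A*`: `(f · a) b = f (a * b)`. -/
def rAct (f : A →L[ℂ] ℂ) (a : A) : A →L[ℂ] ℂ :=
  f.comp (ContinuousLinearMap.mul ℂ A a)

/-- A bounded linear `D : A → A*` is a derivation if `D (a * b) = D a · b + a · D b`. -/
def IsDerivation (D : A →L[ℂ] (A →L[ℂ] ℂ)) : Prop :=
  ∀ a b : A, D (a * b) = rAct (D a) b + lAct a (D b)

/-- A derivation `D : A → A*` is cyclic if `⟨D a, b⟩ + ⟨D b, a⟩ = 0` for all `a, b`. -/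
def IsCyclicDeriv (D : A →L[ℂ] (A →L[ℂ] ℂ)) : Prop :=
  ∀ a b : A, D a b + D b a = 0

/-- `D : A → A*` is approximately inner if there is a net `(f i)` in `A*` with
`D a = lim_i (a · f i - f i · a)` in norm, for every `a ∈ A`. -/
def IsApproxInner {A : Type u} [NonUnitalNormedRing A] [NormedSpace ℂ A]
    [IsScalarTower ℂ A A] [SMulCommClass ℂ A A] (D : A →L[ℂ] (A →L[ℂ] ℂ)) : Prop :=
  ∃ (ι : Type u) (l : Filter ι) (f : ι → (A →L[ℂ] ℂ)), l.NeBot ∧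
    ∀ a : A, Tendsto (fun i => lAct a (f i) - rAct (f i) a) l (𝓝 (D a))

/-- `D : A → A*` is inner if `D a = a · f - f · a` for some fixed `f ∈ A*`. -/
def IsInner (D : A →L[ℂ] (A →L[ℂ] ℂ)) : Prop :=
  ∃ f : A →L[ℂ] ℂ, ∀ a : A, D a = lAct a f - rAct f a

/-- A Banach algebra is approximately cyclic amenable if every cyclic bounded
derivation `D : A → A*` is approximately inner. -/
def ApproxCyclicAmenable (A : Type u) [NonUnitalNormedRing A] [NormedSpace ℂ A]
    [IsScalarTower ℂ A A] [SMulCommClass ℂ A A] : Prop :=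
  ∀ D : A →L[ℂ] (A →L[ℂ] ℂ), IsDerivation D → IsCyclicDeriv D → IsApproxInner D

/-- A Banach algebra is cyclic amenable if every cyclic bounded derivation
`D : A → A*` is inner. -/
def CyclicAmenable (A : Type u) [NonUnitalNormedRing A] [NormedSpace ℂ A]
    [IsScalarTower ℂ A A] [SMulCommClass ℂ A A] : Prop :=
  ∀ D : A →L[ℂ] (A →L[ℂ] ℂ), IsDerivation D → IsCyclicDeriv D → IsInner D

/-- The bidual of `A`; below we install the first Arens product on it. -/
abbrev Bidual (A : Type u) [NormedAddCommGroup A] [NormedSpace ℂ A] : Type u :=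
  (A →L[ℂ] ℂ) →L[ℂ] ℂ

namespace Bidual

variable (A)

/-- `f ↦ (a ↦ f · a)` where `(f · a) b = f (a * b)`, as a continuous bilinear map. -/
def rActL : (A →L[ℂ] ℂ) →L[ℂ] A →L[ℂ] (A →L[ℂ] ℂ) :=
  (((ContinuousLinearMap.compL ℂ A (A →L[ℂ] A) (A →L[ℂ] ℂ)).flip
      (ContinuousLinearMap.mul ℂ A)).comp
    (ContinuousLinearMap.compL ℂ A A ℂ))

@[simp] lemma rActL_apply (f : A →L[ℂ] ℂ) (a b : A) : rActL A f a b = f (a * b) := rfl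

/-- The action `G · f` of the bidual on the dual: `(G · f) a = G (f · a)`. -/
def dotAct (G : Bidual A) : (A →L[ℂ] ℂ) →L[ℂ] (A →L[ℂ] ℂ) :=
  (ContinuousLinearMap.compL ℂ A (A →L[ℂ] ℂ) ℂ G).comp (rActL A)

@[simp] lemma dotAct_apply (G : Bidual A) (f : A →L[ℂ] ℂ) (a : A) :
    dotAct A G f a = G (rActL A f a) := rfl

variable {A}

/-- The first Arens product on the bidual: `⟨F □ G, f⟩ = ⟨F, G · f⟩`. -/
instance : Mul (Bidual A) := ⟨fun F G => F.comp (dotAct A G)⟩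

@[simp] lemma mul_apply (F G : Bidual A) (f : A →L[ℂ] ℂ) :
    (F * G) f = F (dotAct A G f) := rfl

lemma dotAct_add (G H : Bidual A) : dotAct A (G + H) = dotAct A G + dotAct A H := by
  refine ContinuousLinearMap.ext fun g => ContinuousLinearMap.ext fun a => ?_
  simp

lemma dotAct_zero : dotAct A (0 : Bidual A) = 0 := by
  refine ContinuousLinearMap.ext fun g => ContinuousLinearMap.ext fun a => ?_
  simp

lemma dotAct_smul (c : ℂ) (G : Bidual A) : dotAct A (c • G) = c • dotAct A G := by
  refine ContinuousLinearMap.ext fun g => ContinuousLinearMap.ext fun a => ?_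
  simp

instance instNonUnitalRing : NonUnitalRing (Bidual A) where
  __ := (inferInstance : AddCommGroup ((A →L[ℂ] ℂ) →L[ℂ] ℂ))
  mul := (· * ·)
  left_distrib F G H := by
    refine ContinuousLinearMap.ext fun f => ?_
    simp [dotAct_add]
  right_distrib F G H := by
    refine ContinuousLinearMap.ext fun f => ?_
    rfl
  zero_mul F := by refine ContinuousLinearMap.ext fun f => ?_; rfl
  mul_zero F := by
    refine ContinuousLinearMap.ext fun f => ?_
    simp [dotAct_zero]
  mul_assoc F G H := by
    refine ContinuousLinearMap.ext fun f => ?_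
    show F _ = F _
    congr 1
    refine ContinuousLinearMap.ext fun a => ?_
    show G _ = G _
    congr 1
    refine ContinuousLinearMap.ext fun b => ?_
    show H _ = H _
    congr 1
    refine ContinuousLinearMap.ext fun c => ?_
    exact congrArg f (mul_assoc a b c)

lemma norm_dotAct_apply_le (G : Bidual A) (f : A →L[ℂ] ℂ) :
    ‖dotAct A G f‖ ≤ ‖G‖ * ‖f‖ := by
  refine ContinuousLinearMap.opNorm_le_bound _ (by positivity) fun a => ?_
  calc ‖G (rActL A f a)‖ ≤ ‖G‖ * ‖rActL A f a‖ := G.le_opNorm _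
    _ ≤ ‖G‖ * (‖f‖ * ‖a‖) := by
        refine mul_le_mul_of_nonneg_left ?_ (norm_nonneg G)
        refine ContinuousLinearMap.opNorm_le_bound _ (by positivity) fun b => ?_
        calc ‖f (a * b)‖ ≤ ‖f‖ * ‖a * b‖ := f.le_opNorm _
          _ ≤ ‖f‖ * (‖a‖ * ‖b‖) :=
              mul_le_mul_of_nonneg_left (norm_mul_le a b) (norm_nonneg f)
          _ = ‖f‖ * ‖a‖ * ‖b‖ := by ring
    _ = ‖G‖ * ‖f‖ * ‖a‖ := by ring

instance instNonUnitalNormedRing : NonUnitalNormedRing (Bidual A) where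
  __ := instNonUnitalRing
  __ := (inferInstance : NormedAddCommGroup ((A →L[ℂ] ℂ) →L[ℂ] ℂ))
  norm_mul_le F G := by
    refine ContinuousLinearMap.opNorm_le_bound _ (by positivity) fun f => ?_
    calc ‖F (dotAct A G f)‖ ≤ ‖F‖ * ‖dotAct A G f‖ := F.le_opNorm _
      _ ≤ ‖F‖ * (‖G‖ * ‖f‖) :=
          mul_le_mul_of_nonneg_left (norm_dotAct_apply_le G f) (norm_nonneg F)
      _ = ‖F‖ * ‖G‖ * ‖f‖ := by ring

instance : IsScalarTower ℂ (Bidual A) (Bidual A) where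
  smul_assoc c F G := by
    refine ContinuousLinearMap.ext fun f => ?_
    rfl

instance : SMulCommClass ℂ (Bidual A) (Bidual A) where
  smul_comm c F G := by
    refine ContinuousLinearMap.ext fun f => ?_
    show c • (F (dotAct A G f)) = F (dotAct A (c • G) f)
    rw [dotAct_smul]
    simp

end Bidual

noncomputable instance (M : Submodule ℂ (A →L[ℂ] ℂ)) : NormedAddCommGroup ↥M :=
  inferInstance

noncomputable instance (M : Submodule ℂ (A →L[ℂ] ℂ)) : NormedSpace ℂ ↥M :=
  inferInstance

/-- The canonical evaluation map `A → (A_*)*` for a subspace `A_* ⊆ A*`. -/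
def dualEval (M : Submodule ℂ (A →L[ℂ] ℂ)) (a : A) : ↥M →L[ℂ] ℂ :=
  (NormedSpace.inclusionInDoubleDual ℂ A a).comp M.subtypeL

section DualAux

variable (M : Submodule ℂ (A →L[ℂ] ℂ))

/-- Restriction of a bidual element to a subspace of the dual. -/
def restrictM : Bidual A →L[ℂ] (↥M →L[ℂ] ℂ) :=
  (ContinuousLinearMap.compL ℂ ↥M (A →L[ℂ] ℂ) ℂ).flip M.subtypeL

lemma restrictM_apply (F : Bidual A) (m : ↥M) : restrictM M F m = F m := rfl

/-- The evaluation `A → M*` as a continuous linear map. -/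
def evalM : A →L[ℂ] (↥M →L[ℂ] ℂ) :=
  (restrictM M).comp (NormedSpace.inclusionInDoubleDual ℂ A)

lemma evalM_coe : ⇑(evalM M) = dualEval M := rfl

lemma evalM_lin_coe : ⇑(evalM M).toLinearMap = dualEval M := rfl

lemma evalM_apply (a : A) (m : ↥M) : evalM M a m = (m : A →L[ℂ] ℂ) a := rfl

variable {M}

/-- The isometric isomorphism `A ≃ M*` of a dual Banach algebra. -/
def predualIso (hiso : ∀ a : A, ‖dualEval M a‖ = ‖a‖)
    (hbij : Function.Bijective (dualEval M)) : A ≃ₗᵢ[ℂ] (↥M →L[ℂ] ℂ) :=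
  { LinearEquiv.ofBijective (evalM M).toLinearMap (evalM_lin_coe M ▸ hbij) with
    norm_map' := fun a => hiso a }

lemma predualIso_apply (hiso : ∀ a : A, ‖dualEval M a‖ = ‖a‖)
    (hbij : Function.Bijective (dualEval M)) (a : A) :
    predualIso hiso hbij a = evalM M a := rfl

/-- The projection `A** → A` of a dual Banach algebra. -/
def projM (hiso : ∀ a : A, ‖dualEval M a‖ = ‖a‖)
    (hbij : Function.Bijective (dualEval M)) : Bidual A →L[ℂ] A :=
  ((predualIso hiso hbij).symm.toContinuousLinearEquiv :
      (↥M →L[ℂ] ℂ) →L[ℂ] A).comp (restrictM M)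

lemma projM_apply (hiso : ∀ a : A, ‖dualEval M a‖ = ‖a‖)
    (hbij : Function.Bijective (dualEval M)) (F : Bidual A) :
    projM hiso hbij F = (predualIso hiso hbij).symm (restrictM M F) := rfl

lemma evalM_projM (hiso : ∀ a : A, ‖dualEval M a‖ = ‖a‖)
    (hbij : Function.Bijective (dualEval M)) (F : Bidual A) :
    evalM M (projM hiso hbij F) = restrictM M F := by
  rw [projM_apply, ← predualIso_apply hiso hbij]
  exact (predualIso hiso hbij).apply_symm_apply _

lemma evalM_injective (hbij : Function.Bijective (dualEval M)) :
    Function.Injective ⇑(evalM M) := (evalM_coe M) ▸ hbij.1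

lemma mem_projM (hiso : ∀ a : A, ‖dualEval M a‖ = ‖a‖)
    (hbij : Function.Bijective (dualEval M)) (F : Bidual A)
    (f : A →L[ℂ] ℂ) (hf : f ∈ M) : f (projM hiso hbij F) = F f := by
  have h := congrArg (fun g : ↥M →L[ℂ] ℂ => g ⟨f, hf⟩) (evalM_projM hiso hbij F)
  simpa [evalM_apply, restrictM_apply] using h

lemma projM_incl (hiso : ∀ a : A, ‖dualEval M a‖ = ‖a‖)
    (hbij : Function.Bijective (dualEval M)) (a : A) :
    projM hiso hbij (NormedSpace.inclusionInDoubleDual ℂ A a) = a := by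
  apply evalM_injective hbij
  rw [evalM_projM]
  rfl


lemma projM_mul (hlmem : ∀ (a : A), ∀ f ∈ M, lAct a f ∈ M)
    (hrmem : ∀ (a : A), ∀ f ∈ M, rAct f a ∈ M)
    (hiso : ∀ a : A, ‖dualEval M a‖ = ‖a‖)
    (hbij : Function.Bijective (dualEval M)) (F G : Bidual A) :
    projM hiso hbij (F * G) = projM hiso hbij F * projM hiso hbij G := by
  set π : Bidual A →L[ℂ] A := projM hiso hbij with hπdef
  apply evalM_injective hbij
  rw [evalM_projM]
  refine ContinuousLinearMap.ext fun m => ?_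
  obtain ⟨f, hf⟩ := m
  have hdot : Bidual.dotAct A G f = lAct (π G) f := by
    refine ContinuousLinearMap.ext fun a => ?_
    exact (mem_projM hiso hbij G (rAct f a) (hrmem a f hf)).symm
  rw [restrictM_apply, evalM_apply]
  show (F * G) f = f (π F * π G)
  rw [Bidual.mul_apply, hdot]
  exact (mem_projM hiso hbij F (lAct (π G) f) (hlmem (π G) f hf)).symm

end DualAux

lemma incl_mul' (x y : A) :
    ((NormedSpace.inclusionInDoubleDual ℂ A x) * (NormedSpace.inclusionInDoubleDual ℂ A y)
      : Bidual A) = NormedSpace.inclusionInDoubleDual ℂ A (x * y) := by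
  refine ContinuousLinearMap.ext fun f => ?_
  show NormedSpace.inclusionInDoubleDual ℂ A x
      (Bidual.dotAct A (NormedSpace.inclusionInDoubleDual ℂ A y) f) = _
  simp [NormedSpace.dual_def]

section LiftAux

/-- Push-forward of a map `D : A → A*` along a projection `π : A** → A`,
giving a map `A** → (A**)*`. -/
def liftDeriv (π : Bidual A →L[ℂ] A) (D : A →L[ℂ] (A →L[ℂ] ℂ)) :
    Bidual A →L[ℂ] (Bidual A →L[ℂ] ℂ) :=
  ((ContinuousLinearMap.compL ℂ (Bidual A) A ℂ).flip π).comp (D.comp π)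

lemma liftDeriv_apply (π : Bidual A →L[ℂ] A) (D : A →L[ℂ] (A →L[ℂ] ℂ))
    (F G : Bidual A) : liftDeriv π D F G = D (π F) (π G) := rfl

lemma liftDeriv_isDerivation (π : Bidual A →L[ℂ] A)
    (hmul : ∀ F G : Bidual A, π (F * G) = π F * π G)
    (D : A →L[ℂ] (A →L[ℂ] ℂ)) (hD : IsDerivation D) :
    IsDerivation (A := Bidual A) (liftDeriv π D) := by
  intro F G
  refine ContinuousLinearMap.ext fun H => ?_
  have h1 : liftDeriv π D (F * G) H = D (π F * π G) (π H) := by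
    rw [liftDeriv_apply, hmul]
  have h2 : (rAct (liftDeriv π D F) G + lAct F (liftDeriv π D G)) H
      = D (π F) (π G * π H) + D (π G) (π H * π F) := by
    show liftDeriv π D F (G * H) + liftDeriv π D G (H * F) = _
    rw [liftDeriv_apply, liftDeriv_apply, hmul, hmul]
  rw [h1, h2, hD (π F) (π G)]
  rfl

lemma liftDeriv_isCyclic (π : Bidual A →L[ℂ] A)
    (D : A →L[ℂ] (A →L[ℂ] ℂ)) (hcyc : IsCyclicDeriv D) :
    IsCyclicDeriv (A := Bidual A) (liftDeriv π D) := fun F G => hcyc (π F) (π G)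

/-- Restriction of a functional on the bidual back to `A`. -/
def restrBack : (Bidual A →L[ℂ] ℂ) →L[ℂ] (A →L[ℂ] ℂ) :=
  ContinuousLinearMap.precomp ℂ
    (NormedSpace.inclusionInDoubleDual ℂ A : A →L[ℂ] Bidual A)

lemma restrBack_commutator (a : A) (g : Bidual A →L[ℂ] ℂ) :
    restrBack (lAct (NormedSpace.inclusionInDoubleDual ℂ A a) g
        - rAct g (NormedSpace.inclusionInDoubleDual ℂ A a))
      = lAct a (restrBack g) - rAct (restrBack g) a := by
  have h1 : restrBack (lAct (NormedSpace.inclusionInDoubleDual ℂ A a) g)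
      = lAct a (restrBack g) := by
    refine ContinuousLinearMap.ext fun b => ?_
    show g (NormedSpace.inclusionInDoubleDual ℂ A b
        * NormedSpace.inclusionInDoubleDual ℂ A a) = g (NormedSpace.inclusionInDoubleDual ℂ A (b * a))
    rw [incl_mul']
  have h2 : restrBack (rAct g (NormedSpace.inclusionInDoubleDual ℂ A a))
      = rAct (restrBack g) a := by
    refine ContinuousLinearMap.ext fun b => ?_
    show g (NormedSpace.inclusionInDoubleDual ℂ A a
        * NormedSpace.inclusionInDoubleDual ℂ A b) = g (NormedSpace.inclusionInDoubleDual ℂ A (a * b))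
    rw [incl_mul']
  rw [map_sub, h1, h2]

lemma restrBack_liftDeriv (π : Bidual A →L[ℂ] A)
    (hπι : ∀ a : A, π (NormedSpace.inclusionInDoubleDual ℂ A a) = a)
    (D : A →L[ℂ] (A →L[ℂ] ℂ)) (a : A) :
    restrBack (liftDeriv π D (NormedSpace.inclusionInDoubleDual ℂ A a)) = D a := by
  refine ContinuousLinearMap.ext fun b => ?_
  show D (π (NormedSpace.inclusionInDoubleDual ℂ A a))
      (π (NormedSpace.inclusionInDoubleDual ℂ A b)) = D a b
  rw [hπι, hπι]

end LiftAux

set_option maxHeartbeats 4000000 in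
lemma approxCyclicAmenable_aux
    {A : Type u} [NonUnitalNormedRing A] [NormedSpace ℂ A]
    [IsScalarTower ℂ A A] [SMulCommClass ℂ A A]
    (M : Submodule ℂ (A →L[ℂ] ℂ))
    (hlmem : ∀ (a : A), ∀ f ∈ M, lAct a f ∈ M)
    (hrmem : ∀ (a : A), ∀ f ∈ M, rAct f a ∈ M)
    (hiso : ∀ a : A, ‖dualEval M a‖ = ‖a‖)
    (hbij : Function.Bijective (dualEval M))
    (hACA : ApproxCyclicAmenable (Bidual A)) :
    ApproxCyclicAmenable A := by
  intro D hD hcyc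
  obtain ⟨ι', l, f, hne, htend⟩ :=
    hACA (liftDeriv (projM hiso hbij) D)
      (liftDeriv_isDerivation (projM hiso hbij) (projM_mul hlmem hrmem hiso hbij) D hD)
      (liftDeriv_isCyclic (projM hiso hbij) D hcyc)
  refine ⟨ι', l, fun i => restrBack (f i), hne, fun a => ?_⟩
  have h1 := ((restrBack (A := A)).continuous.tendsto
      (liftDeriv (projM hiso hbij) D (NormedSpace.inclusionInDoubleDual ℂ A a))).comp
    (htend (NormedSpace.inclusionInDoubleDual ℂ A a))
  rw [restrBack_liftDeriv (projM hiso hbij) (projM_incl hiso hbij) D a] at h1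
  exact h1.congr fun i => restrBack_commutator a (f i)

/-- Let `A` be a dual Banach algebra, with predual the closed
sub-bimodule `M` of `A*` (the canonical evaluation `A → M*` is an isometric bijection).
If `(A**, □)` is approximately cyclic amenable, then so is `A`. -/
theorem approxCyclicAmenable_of_bidual_dualAlgebra
    {A : Type u} [NonUnitalNormedRing A] [NormedSpace ℂ A]
    [IsScalarTower ℂ A A] [SMulCommClass ℂ A A] [CompleteSpace A]
    (M : Submodule ℂ (A →L[ℂ] ℂ)) (hclosed : IsClosed (M : Set (A →L[ℂ] ℂ)))
    (hlmem : ∀ (a : A), ∀ f ∈ M, lAct a f ∈ M)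
    (hrmem : ∀ (a : A), ∀ f ∈ M, rAct f a ∈ M)
    (hiso : ∀ a : A, ‖dualEval M a‖ = ‖a‖)
    (hbij : Function.Bijective (dualEval M))
    (hACA : ApproxCyclicAmenable (Bidual A)) :
    ApproxCyclicAmenable A :=
  approxCyclicAmenable_aux M hlmem hrmem hiso hbij hACA
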